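/- Let q be an indeterminate with [2]_q = q + q^{-1}. In the variables a, b₁, b₂, c over Q(q), set P(a,b₁,b₂,c) = (qa − b₂)/(a − qb₂) + (qc − b₁)/(c − qb₁) − [2]_q (qa − b₂)(qc − b₁)/((a − qb₂)(c − qb₁)) + (qa − b₂)(qc − b₁)(qc − b₂)/((a − qb₂)(c − qb₁)(c − qb₂)) + (qa − b₁)(qa − b₂)(qc − b₁)/((a − qb₁)(a − qb₂)(c − qb₁)). Then the symmetrization in b₁, b₂ of P(a,b₁,b₂,c)/(b₁ − b₂) vanishes: P(a,b₁,b₂,c)/(b₁−b₂) + P(a,b₂,b₁,c)/(b₂−b₁) = 0. -/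

import Mathlib

set_option maxHeartbeats 1000000

/-- The field `ℚ(q)(a,b₁,b₂,c)` of rational functions in `q, a, b₁, b₂, c`. -/
abbrev KK := FractionRing (MvPolynomial (Fin 5) ℚ)

noncomputable def qq : KK := algebraMap (MvPolynomial (Fin 5) ℚ) KK (MvPolynomial.X 0)
noncomputable def aa : KK := algebraMap (MvPolynomial (Fin 5) ℚ) KK (MvPolynomial.X 1)
noncomputable def bb1 : KK := algebraMap (MvPolynomial (Fin 5) ℚ) KK (MvPolynomial.X 2)
noncomputable def bb2 : KK := algebraMap (MvPolynomial (Fin 5) ℚ) KK (MvPolynomial.X 3)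
noncomputable def cc : KK := algebraMap (MvPolynomial (Fin 5) ℚ) KK (MvPolynomial.X 4)

/-- The rational function `P(a,b₁,b₂,c)` from the quartic Serre relation. -/
noncomputable def P7 (a b1 b2 c : KK) : KK :=
  (qq * a - b2) / (a - qq * b2) + (qq * c - b1) / (c - qq * b1)
    - (qq + qq⁻¹) * ((qq * a - b2) * (qq * c - b1)) / ((a - qq * b2) * (c - qq * b1))
    + ((qq * a - b2) * (qq * c - b1) * (qq * c - b2)) /
        ((a - qq * b2) * (c - qq * b1) * (c - qq * b2))
    + ((qq * a - b1) * (qq * a - b2) * (qq * c - b1)) /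
        ((a - qq * b1) * (a - qq * b2) * (c - qq * b1))

/-- The numerator of `P7` over the common denominator
`q (a−qb₁)(a−qb₂)(c−qb₁)(c−qb₂)`. -/
noncomputable def N7 (a b1 b2 c : KK) : KK :=
  (qq * a - b2) * (qq * (a - qq * b1) * (c - qq * b1) * (c - qq * b2))
  + (qq * c - b1) * (qq * (a - qq * b1) * (a - qq * b2) * (c - qq * b2))
  - (qq * qq + 1) * ((qq * a - b2) * (qq * c - b1)) * ((a - qq * b1) * (c - qq * b2))
  + ((qq * a - b2) * (qq * c - b1) * (qq * c - b2)) * (qq * (a - qq * b1))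
  + ((qq * a - b1) * (qq * a - b2) * (qq * c - b1)) * (qq * (c - qq * b2))

lemma ne_of_eval (p : MvPolynomial (Fin 5) ℚ) (f : Fin 5 → ℚ)
    (h : MvPolynomial.eval f p ≠ 0) :
    algebraMap (MvPolynomial (Fin 5) ℚ) KK p ≠ 0 := by
  intro h0
  have hp : p = 0 := IsFractionRing.injective (MvPolynomial (Fin 5) ℚ) KK (by simpa using h0)
  rw [hp] at h
  simp at h

lemma P7_eq (a b1 b2 c : KK) (hq : qq ≠ 0)
    (h1 : a - qq * b1 ≠ 0) (h2 : a - qq * b2 ≠ 0)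
    (h3 : c - qq * b1 ≠ 0) (h4 : c - qq * b2 ≠ 0) :
    P7 a b1 b2 c = N7 a b1 b2 c /
      (qq * (a - qq * b1) * (a - qq * b2) * (c - qq * b1) * (c - qq * b2)) := by
  have hD : qq * (a - qq * b1) * (a - qq * b2) * (c - qq * b1) * (c - qq * b2) ≠ 0 := by
    simp [hq, h1, h2, h3, h4, mul_ne_zero]
  have e1 : (qq * a - b2) / (a - qq * b2) =
      (qq * a - b2) * (qq * (a - qq * b1) * (c - qq * b1) * (c - qq * b2)) /
      (qq * (a - qq * b1) * (a - qq * b2) * (c - qq * b1) * (c - qq * b2)) := by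
    rw [div_eq_div_iff h2 hD]; ring
  have e2 : (qq * c - b1) / (c - qq * b1) =
      (qq * c - b1) * (qq * (a - qq * b1) * (a - qq * b2) * (c - qq * b2)) /
      (qq * (a - qq * b1) * (a - qq * b2) * (c - qq * b1) * (c - qq * b2)) := by
    rw [div_eq_div_iff h3 hD]; ring
  have e3 : (qq + qq⁻¹) * ((qq * a - b2) * (qq * c - b1)) /
        ((a - qq * b2) * (c - qq * b1)) =
      (qq * qq + 1) * ((qq * a - b2) * (qq * c - b1)) * ((a - qq * b1) * (c - qq * b2)) /
      (qq * (a - qq * b1) * (a - qq * b2) * (c - qq * b1) * (c - qq * b2)) := by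
    rw [div_eq_div_iff (mul_ne_zero h2 h3) hD]
    field_simp
  have e4 : ((qq * a - b2) * (qq * c - b1) * (qq * c - b2)) /
        ((a - qq * b2) * (c - qq * b1) * (c - qq * b2)) =
      ((qq * a - b2) * (qq * c - b1) * (qq * c - b2)) * (qq * (a - qq * b1)) /
      (qq * (a - qq * b1) * (a - qq * b2) * (c - qq * b1) * (c - qq * b2)) := by
    rw [div_eq_div_iff (mul_ne_zero (mul_ne_zero h2 h3) h4) hD]; ring
  have e5 : ((qq * a - b1) * (qq * a - b2) * (qq * c - b1)) /
        ((a - qq * b1) * (a - qq * b2) * (c - qq * b1)) =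
      ((qq * a - b1) * (qq * a - b2) * (qq * c - b1)) * (qq * (c - qq * b2)) /
      (qq * (a - qq * b1) * (a - qq * b2) * (c - qq * b1) * (c - qq * b2)) := by
    rw [div_eq_div_iff (mul_ne_zero (mul_ne_zero h1 h2) h3) hD]; ring
  rw [P7, N7, e1, e2, e3, e4, e5, ← add_div, div_sub_div_same,
    ← add_div, ← add_div]

lemma P7_symm : P7 aa bb1 bb2 cc = P7 aa bb2 bb1 cc := by
  have hq : qq ≠ 0 := by
    rw [qq]; exact ne_of_eval _ ![2, 1, 3, 5, 7] (by simp)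
  have h1 : aa - qq * bb1 ≠ 0 := by
    rw [aa, qq, bb1, ← map_mul, ← map_sub]
    exact ne_of_eval _ ![2, 1, 3, 5, 7] (by simp; norm_num)
  have h2 : aa - qq * bb2 ≠ 0 := by
    rw [aa, qq, bb2, ← map_mul, ← map_sub]
    exact ne_of_eval _ ![2, 1, 3, 5, 7] (by simp; norm_num)
  have h3 : cc - qq * bb1 ≠ 0 := by
    rw [cc, qq, bb1, ← map_mul, ← map_sub]
    exact ne_of_eval _ ![2, 1, 3, 5, 7] (by simp; norm_num)
  have h4 : cc - qq * bb2 ≠ 0 := by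
    rw [cc, qq, bb2, ← map_mul, ← map_sub]
    exact ne_of_eval _ ![2, 1, 3, 5, 7] (by simp; norm_num)
  rw [P7_eq aa bb1 bb2 cc hq h1 h2 h3 h4, P7_eq aa bb2 bb1 cc hq h2 h1 h4 h3]
  have hN : N7 aa bb1 bb2 cc = N7 aa bb2 bb1 cc := by rw [N7, N7]; ring
  have hDD : qq * (aa - qq * bb1) * (aa - qq * bb2) * (cc - qq * bb1) * (cc - qq * bb2)
      = qq * (aa - qq * bb2) * (aa - qq * bb1) * (cc - qq * bb2) * (cc - qq * bb1) := by
    ring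
  rw [hN, hDD]

/-- The symmetrization in `b₁, b₂` of `P(a,b₁,b₂,c)/(b₁ − b₂)` vanishes. -/
theorem stmt7 :
    P7 aa bb1 bb2 cc / (bb1 - bb2) + P7 aa bb2 bb1 cc / (bb2 - bb1) = 0 := by
  rw [← P7_symm]
  have h : bb2 - bb1 = -(bb1 - bb2) := by ring
  rw [h, div_neg]
  ring
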